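/- Suppose α₁ is irrational, θ = (p₁/q₁)·α₁ + p₂/q₂ for integers p₁, p₂ and positive integers q₁, q₂, and 1, α₁, θ·α₂ are linearly independent over ℚ. Then for every s ∈ ℝ and every w ∈ ℝ/ℤ, the point (−(p₁/q₁)·s, s mod 1, w) lies in the closure of S. -/

import Mathlib

/-- The set `S = { (m − k·θ, k·α₁ mod 1, m·α₂ mod 1) : k, m ∈ ℕ }` in
`ℝ × (ℝ/ℤ) × (ℝ/ℤ)`. -/
def Sset (θ α₁ α₂ : ℝ) : Set (ℝ × AddCircle (1 : ℝ) × AddCircle (1 : ℝ)) :=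
  {x | ∃ k m : ℕ, x = ((m : ℝ) - (k : ℝ) * θ,
    (((k : ℝ) * α₁ : ℝ) : AddCircle (1 : ℝ)),
    (((m : ℝ) * α₂ : ℝ) : AddCircle (1 : ℝ)))}


open Filter Set

lemma int_small_eq_zero {z : ℝ} (hm : ∃ m : ℤ, z = m) (hz : |z| < 1) : z = 0 := by
  obtain ⟨m, rfl⟩ := hm
  have h1 : |(m:ℤ)| < 1 := by exact_mod_cast (by push_cast; exact hz : ((|m|:ℤ):ℝ) < 1)
  have : m = 0 := by rw [abs_lt] at h1; omega
  simp [this]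

theorem graph_lemma (K : Set (ℝ × ℝ)) (hclosed : IsClosed K)
    (hadd : ∀ p q : ℝ × ℝ, p ∈ K → q ∈ K → p + q ∈ K)
    (hneg : ∀ p : ℝ × ℝ, p ∈ K → -p ∈ K)
    (hfiber : ∀ z : ℝ, ((0:ℝ), z) ∈ K ↔ ∃ m : ℤ, z = m)
    (hex : ∀ x : ℝ, ∃ z : ℝ, (x, z) ∈ K) :
    ∃ c : ℝ, ∀ x z : ℝ, (x, z) ∈ K → ∃ m : ℤ, z = c * x + m := by
  have hsub : ∀ p q : ℝ × ℝ, p ∈ K → q ∈ K → p - q ∈ K := by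
    intro p q hp hq; rw [sub_eq_add_neg]; exact hadd _ _ hp (hneg _ hq)
  have hdiff : ∀ x z z' : ℝ, (x, z) ∈ K → (x, z') ∈ K → ∃ m : ℤ, z - z' = m := by
    intro x z z' h h'
    have h1 := hsub _ _ h h'
    have heq : ((x,z) : ℝ × ℝ) - (x, z') = ((0:ℝ), z - z') := by ext <;> simp
    rw [heq] at h1
    exact (hfiber _).mp h1
  have hshift : ∀ x z : ℝ, (x, z) ∈ K → ∀ m : ℤ, (x, z + m) ∈ K := by
    intro x z h m
    have h2 : ((0:ℝ), (m:ℝ)) ∈ K := (hfiber _).mpr ⟨m, rfl⟩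
    have h1 := hadd _ _ h h2
    have heq : ((x,z) : ℝ × ℝ) + (0, (m:ℝ)) = (x, z + m) := by ext <;> simp
    rwa [heq] at h1
  -- continuity at 0
  have cont0 : ∀ ε : ℝ, 0 < ε → ε < 1/2 →
      ∃ δ > 0, ∀ x z : ℝ, |x| < δ → (x, z) ∈ K → ∃ m : ℤ, |z - m| < ε := by
    intro ε hε hε2
    by_contra hcon
    push_neg at hcon
    have h1 : ∀ i : ℕ, ∃ x z : ℝ, |x| < 1/((i:ℝ)+1) ∧ (x, z) ∈ K ∧ ∀ m : ℤ, ε ≤ |z - m| := by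
      intro i
      obtain ⟨x, z, hx, hK, hz⟩ := hcon (1/((i:ℝ)+1)) (by positivity)
      exact ⟨x, z, hx, hK, hz⟩
    choose x z hx hK hz using h1
    set z' : ℕ → ℝ := fun i => Int.fract (z i) with hz'def
    have hK' : ∀ i, (x i, z' i) ∈ K := by
      intro i
      have h2 := hshift _ _ (hK i) (-⌊z i⌋)
      have heq : z i + ((-⌊z i⌋ : ℤ) : ℝ) = z' i := by
        simp only [hz'def, Int.fract]; push_cast; ring
      rwa [heq] at h2
    have hz'' : ∀ i, ∀ m : ℤ, ε ≤ |z' i - m| := by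
      intro i m
      have h2 := hz i (m + ⌊z i⌋)
      have heq : z' i - (m:ℝ) = z i - ((m + ⌊z i⌋ : ℤ) : ℝ) := by
        simp only [hz'def, Int.fract]; push_cast; ring
      rwa [heq]
    have hmem : ∀ i, (x i, z' i) ∈ Icc (-1:ℝ) 1 ×ˢ Icc (0:ℝ) 1 := by
      intro i
      constructor
      · have h1 : (1:ℝ)/((i:ℝ)+1) ≤ 1 := by
          rw [div_le_one (by positivity)]; linarith [Nat.cast_nonneg (α := ℝ) i]
        have h2 := (hx i).le.trans h1
        rw [abs_le] at h2; exact ⟨h2.1, h2.2⟩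
      · exact ⟨Int.fract_nonneg _, (Int.fract_lt_one _).le⟩
    obtain ⟨⟨a, b⟩, _, φ, hφ, htend⟩ :=
      ((isCompact_Icc).prod isCompact_Icc).tendsto_subseq hmem
    have habK : (a, b) ∈ K := hclosed.mem_of_tendsto htend (Eventually.of_forall fun i => hK' _)
    have ha : a = 0 := by
      have h1 : Tendsto (fun i => x (φ i)) atTop (nhds a) :=
        (continuous_fst.tendsto _).comp htend
      have hb : Tendsto (fun i : ℕ => 1/((φ i : ℝ)+1)) atTop (nhds 0) :=
        tendsto_one_div_add_atTop_nhds_zero_nat.comp hφ.tendsto_atTop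
      have h2 : Tendsto (fun i => x (φ i)) atTop (nhds 0) :=
        squeeze_zero_norm (fun i => by
          rw [Real.norm_eq_abs]; exact (hx (φ i)).le) hb
      exact tendsto_nhds_unique h1 h2
    subst ha
    obtain ⟨m, hm⟩ := (hfiber b).mp habK
    have h3 : Tendsto (fun i => |z' (φ i) - (m:ℝ)|) atTop (nhds |b - m|) := by
      have h4 : Tendsto (fun i => z' (φ i)) atTop (nhds b) :=
        (continuous_snd.tendsto _).comp htend
      exact (h4.sub_const _).abs
    have h4 : ε ≤ |b - (m:ℝ)| := ge_of_tendsto h3 (Eventually.of_forall fun i => hz'' _ _)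
    rw [hm] at h4
    simp at h4
    linarith
  obtain ⟨δ, hδ, hδP⟩ := cont0 (1/4) (by norm_num) (by norm_num)
  have hgood : ∀ x : ℝ, |x| < δ → ∃ z, (x, z) ∈ K ∧ |z| < 1/4 := by
    intro x hxδ
    obtain ⟨z₀, hz₀⟩ := hex x
    obtain ⟨m, hm⟩ := hδP x z₀ hxδ hz₀
    refine ⟨z₀ - m, ?_, hm⟩
    have := hshift _ _ hz₀ (-m)
    rwa [show z₀ + ((-m : ℤ):ℝ) = z₀ - m by push_cast; ring] at this
  classical
  set g : ℝ → ℝ := fun x => if h : |x| < δ then (hgood x h).choose else 0 with hgdef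
  have hgK : ∀ x, |x| < δ → (x, g x) ∈ K := by
    intro x h; rw [hgdef]; simp only [dif_pos h]; exact (hgood x h).choose_spec.1
  have hgs : ∀ x, |x| < δ → |g x| < 1/4 := by
    intro x h; rw [hgdef]; simp only [dif_pos h]; exact (hgood x h).choose_spec.2
  have gadd : ∀ x y, |x| < δ → |y| < δ → |x + y| < δ → g (x + y) = g x + g y := by
    intro x y hx hy hxy
    have h1 := hadd _ _ (hgK x hx) (hgK y hy)
    have heq : ((x, g x) : ℝ × ℝ) + (y, g y) = (x + y, g x + g y) := by ext <;> simp
    rw [heq] at h1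
    obtain ⟨m, hm⟩ := hdiff _ _ _ h1 (hgK _ hxy)
    have h2 : g x + g y - g (x + y) = 0 := by
      apply int_small_eq_zero ⟨m, hm⟩
      have e1 := hgs x hx; have e2 := hgs y hy; have e3 := hgs _ hxy
      rw [abs_lt] at e1 e2 e3 ⊢; constructor <;> linarith
    linarith
  have gneg : ∀ x, |x| < δ → g (-x) = - g x := by
    intro x hx
    have hx' : |-x| < δ := by rwa [abs_neg]
    have h1 := hadd _ _ (hgK x hx) (hgK _ hx')
    have heq : ((x, g x) : ℝ × ℝ) + (-x, g (-x)) = ((0:ℝ), g x + g (-x)) := by ext <;> simp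
    rw [heq] at h1
    have h2 : g x + g (-x) = 0 := by
      apply int_small_eq_zero ((hfiber _).mp h1)
      have e1 := hgs x hx; have e2 := hgs _ hx'
      rw [abs_lt] at e1 e2 ⊢; constructor <;> linarith
    linarith
  have gnat : ∀ n : ℕ, ∀ x, |x| < δ → |(n:ℝ) * x| < δ → g ((n:ℝ) * x) = n * g x := by
    intro n
    induction n with
    | zero =>
      intro x _ _
      have h0 : ((0:ℝ), g 0) ∈ K := by simpa using hgK 0 (by simpa using hδ)
      have h1 : g 0 = 0 := int_small_eq_zero ((hfiber _).mp h0)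
        (by have := hgs 0 (by simpa using hδ); linarith)
      simpa using h1
    | succ n ih =>
      intro x hx hsx
      push_cast at hsx ⊢
      have hnx : |(n:ℝ) * x| < δ := by
        have h1 : |(n:ℝ) * x| ≤ |((n:ℝ)+1) * x| := by
          rw [abs_mul, abs_mul]
          apply mul_le_mul_of_nonneg_right _ (abs_nonneg x)
          rw [Nat.abs_cast, abs_of_nonneg (by positivity : (0:ℝ) ≤ (n:ℝ)+1)]
          linarith
        exact lt_of_le_of_lt h1 hsx
      rw [show ((n:ℝ)+1) * x = (n:ℝ)*x + x by ring,
        gadd _ _ hnx hx (by rw [show (n:ℝ)*x + x = ((n:ℝ)+1)*x by ring]; exact hsx),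
        ih x hx hnx]
      ring
  have gcont : ∀ ε : ℝ, 0 < ε → ε < 1/4 → ∃ δ' > 0, ∀ x y, |x| < δ → |y| < δ →
      |x - y| < δ' → |g x - g y| < ε := by
    intro ε hε hε4
    obtain ⟨δ', hδ', hP⟩ := cont0 ε hε (by linarith)
    refine ⟨δ', hδ', fun x y hx hy hxy => ?_⟩
    have h1 := hsub _ _ (hgK x hx) (hgK y hy)
    have heq : ((x, g x) : ℝ × ℝ) - (y, g y) = (x - y, g x - g y) := by ext <;> simp
    rw [heq] at h1
    obtain ⟨m, hm⟩ := hP _ _ hxy h1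
    have hm0 : (m:ℝ) = 0 := by
      apply int_small_eq_zero ⟨m, rfl⟩
      have e1 := hgs x hx; have e2 := hgs y hy
      rw [abs_lt] at e1 e2 hm ⊢
      constructor <;> linarith
    rw [hm0, sub_zero] at hm
    exact hm
  set β := δ/2 with hβdef
  have hβ : 0 < β := by positivity
  have hβδ : |β| < δ := by rw [abs_of_pos hβ]; linarith
  set c := g β / β with hcdef
  have glin0 : ∀ x, 0 ≤ x → x ≤ β → g x = c * x := by
    intro x hx0 hxβ
    have hxδ : |x| < δ := by rw [abs_of_nonneg hx0]; linarith
    have key : ∀ ε₀ : ℝ, 0 < ε₀ → |g x - c * x| < ε₀ := by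
      intro ε₀ hε₀
      set ε := min (ε₀/2) (1/8) with hεdef
      have hε : 0 < ε := by apply lt_min <;> linarith
      have hε4 : ε < 1/4 := lt_of_le_of_lt (min_le_right _ _) (by norm_num)
      obtain ⟨δ', hδ', hP⟩ := gcont ε hε hε4
      obtain ⟨n, hn⟩ := exists_nat_gt (max (β/δ') (|c| * β/(ε₀/2)))
      have hnpos : (0:ℝ) < n := lt_trans (lt_max_of_lt_left (by positivity)) hn
      have hn1 : (1:ℝ) ≤ n := by exact_mod_cast Nat.cast_pos.mp hnpos
      set y := β / n with hydef
      have hy0 : 0 < y := by positivity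
      have hyβ : y ≤ β := by rw [hydef, div_le_iff₀ hnpos]; nlinarith
      have hyδ : |y| < δ := by rw [abs_of_pos hy0]; linarith
      have hyδ' : y < δ' := by
        have h1 : β/δ' < n := lt_of_le_of_lt (le_max_left _ _) hn
        rw [div_lt_iff₀ hδ'] at h1
        rw [hydef, div_lt_iff₀ hnpos]
        linarith
      set k := ⌊x * n / β⌋ with hkdef
      have hk0 : 0 ≤ k := Int.le_floor.mpr (by push_cast; positivity)
      have hkn : (k:ℝ) ≤ n := by
        apply le_trans (Int.floor_le _)
        rw [div_le_iff₀ hβ]; nlinarith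
      set r := (k:ℝ) * y with hrdef
      have hrx : r ≤ x := by
        have h2 : (k:ℝ) * (β/n) ≤ x * n / β * (β/n) := by
          apply mul_le_mul_of_nonneg_right (Int.floor_le _); positivity
        have h3 : x * n / β * (β/n) = x := by field_simp
        rw [hrdef, hydef]; linarith [h2, h3]
      have hxr : x - r < y := by
        have h1 : x * n / β - 1 < (k:ℝ) := Int.sub_one_lt_floor _
        have h2 : (x * n / β - 1) * (β / n) < (k:ℝ) * (β/n) := by
          apply mul_lt_mul_of_pos_right h1; positivity
        have h3 : (x * n / β - 1) * (β / n) = x - β/n := by field_simp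
        rw [hrdef, hydef]; linarith
      have hr0 : 0 ≤ r := by positivity
      have hrβ : r ≤ β := le_trans hrx hxβ
      have hrδ : |r| < δ := by rw [abs_of_nonneg hr0]; linarith
      have hny : (n:ℝ) * y = β := by rw [hydef]; field_simp
      have hgy : g β = (n:ℝ) * g y := by
        have h1 := gnat n y hyδ (by rw [hny, abs_of_pos hβ]; linarith)
        rwa [hny] at h1
      have hktn : ((k.toNat:ℕ):ℝ) = (k:ℝ) := by exact_mod_cast Int.toNat_of_nonneg hk0
      have hgyv : g y = c * y := by
        have hβne : β ≠ 0 := ne_of_gt hβ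
        have hnne : (n:ℝ) ≠ 0 := ne_of_gt hnpos
        rw [hcdef, hgy, hydef]
        field_simp
      have hgr : g r = c * r := by
        have h1 := gnat k.toNat y hyδ (by rw [hktn, ← hrdef]; exact hrδ)
        rw [hktn, ← hrdef] at h1
        rw [h1, hgyv, hrdef]; ring
      have h5 : |g x - g r| < ε := hP x r hxδ hrδ (by rw [abs_of_nonneg (by linarith)]; linarith)
      have h6 : |g r - c * x| ≤ |c| * y := by
        rw [hgr, ← mul_sub, abs_mul]
        apply mul_le_mul_of_nonneg_left _ (abs_nonneg c)
        rw [abs_of_nonpos (by linarith)]; linarith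
      have h7 : |c| * y < ε₀/2 := by
        have h1 : |c| * β/(ε₀/2) < n := lt_of_le_of_lt (le_max_right _ _) hn
        rw [div_lt_iff₀ (by linarith : (0:ℝ) < ε₀/2)] at h1
        have h2 : |c| * y = |c| * β / n := by rw [hydef]; ring
        rw [h2, div_lt_iff₀ hnpos]
        linarith
      have h8 : |g x - c * x| ≤ |g x - g r| + |g r - c * x| := abs_sub_le _ _ _
      have h9 : ε ≤ ε₀/2 := min_le_left _ _
      linarith
    by_contra hne
    exact absurd (key _ (abs_pos.mpr (sub_ne_zero.mpr hne))) (lt_irrefl _)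
  have glin : ∀ x : ℝ, |x| ≤ β → g x = c * x := by
    intro x hxβ
    rcases le_or_gt 0 x with hx | hx
    · exact glin0 x hx (by rwa [abs_of_nonneg hx] at hxβ)
    · have h1 : g (-x) = c * (-x) := glin0 (-x) (by linarith) (by rwa [abs_of_neg hx] at hxβ)
      have h2 : g (-(-x)) = - g (-x) :=
        gneg (-x) (by rw [abs_neg]; exact lt_of_le_of_lt hxβ (by linarith))
      simp only [neg_neg] at h2
      rw [h2, h1]; ring
  have hnsmul : ∀ n : ℕ, ∀ x z : ℝ, (x, z) ∈ K → ((n:ℝ) * x, (n:ℝ) * z) ∈ K := by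
    intro n
    induction n with
    | zero =>
      intro x z _
      rw [show ((0:ℕ):ℝ) * x = 0 by push_cast; ring, show ((0:ℕ):ℝ) * z = 0 by push_cast; ring]
      exact (hfiber 0).mpr ⟨0, by simp⟩
    | succ n ih =>
      intro x z hp
      have h1 := hadd _ _ (ih x z hp) hp
      have heq : (((n:ℝ)*x, (n:ℝ)*z) : ℝ × ℝ) + (x, z) = (((n+1:ℕ):ℝ)*x, ((n+1:ℕ):ℝ)*z) := by
        ext <;> (simp only [Prod.mk_add_mk]; push_cast; ring)
      rwa [heq] at h1
  refine ⟨c, fun x z hxz => ?_⟩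
  obtain ⟨n, hn⟩ := exists_nat_gt (|x| / β)
  have hn0 : (0:ℝ) < n := lt_of_le_of_lt (by positivity) hn
  have hnne : (n:ℝ) ≠ 0 := ne_of_gt hn0
  set y := x / n with hydef
  have hyβ : |y| ≤ β := by
    rw [hydef, abs_div, abs_of_pos hn0, div_le_iff₀ hn0]
    rw [div_lt_iff₀ hβ] at hn
    nlinarith
  have hyδ : |y| < δ := lt_of_le_of_lt hyβ (by linarith)
  have h1 : (y, c * y) ∈ K := by
    have h2 := hgK y hyδ
    rwa [glin y hyβ] at h2
  have h2 : (x, c * x) ∈ K := by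
    have h3 := hnsmul n _ _ h1
    rw [show (n:ℝ) * y = x by rw [hydef]; field_simp,
      show (n:ℝ) * (c * y) = c * x by rw [hydef]; field_simp] at h3
    exact h3
  obtain ⟨m, hm⟩ := hdiff _ _ _ hxz h2
  exact ⟨m, by linarith⟩


/-- The subgroup `ℤ·(x₁,x₂) + ℤ²` of `ℝ²`. -/
def kronSub (x₁ x₂ : ℝ) : AddSubgroup (ℝ × ℝ) where
  carrier := {p : ℝ × ℝ | ∃ n m k : ℤ, p = ((n:ℝ) * x₁ + m, (n:ℝ) * x₂ + k)}
  add_mem' := by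
    rintro p q ⟨n, m, k, rfl⟩ ⟨n', m', k', rfl⟩
    refine ⟨n + n', m + m', k + k', ?_⟩
    have : ((((n:ℝ) * x₁ + m, (n:ℝ) * x₂ + k) : ℝ × ℝ) + ((n':ℝ) * x₁ + m', (n':ℝ) * x₂ + k'))
        = (((n:ℝ) + n') * x₁ + ((m:ℝ) + m'), ((n:ℝ) + n') * x₂ + ((k:ℝ) + k')) := by
      ext <;> (simp only [Prod.mk_add_mk]; ring)
    rw [this]; push_cast; rfl
  zero_mem' := ⟨0, 0, 0, by norm_num; rfl⟩
  neg_mem' := by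
    rintro p ⟨n, m, k, rfl⟩
    refine ⟨-n, -m, -k, ?_⟩
    have : (-(((n:ℝ) * x₁ + m, (n:ℝ) * x₂ + k) : ℝ × ℝ))
        = ((-(n:ℝ)) * x₁ + (-(m:ℝ)), (-(n:ℝ)) * x₂ + (-(k:ℝ))) := by
      ext <;> (simp only [Prod.fst_neg, Prod.snd_neg]; ring)
    rw [this]; push_cast; rfl

theorem kronecker_R2 (x₁ x₂ : ℝ)
    (hind : ∀ a b c : ℤ, (a:ℝ) + b * x₁ + c * x₂ = 0 → b = 0 ∧ c = 0) :
    Dense ((kronSub x₁ x₂ : AddSubgroup (ℝ × ℝ)) : Set (ℝ × ℝ)) := by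
  set G := kronSub x₁ x₂ with hGdef
  set H := G.topologicalClosure with hHdef
  have hHcar : (H : Set (ℝ × ℝ)) = closure (G : Set (ℝ × ℝ)) := rfl
  have hHclosed : IsClosed (H : Set (ℝ × ℝ)) := by rw [hHcar]; exact isClosed_closure
  have hGH : ∀ p : ℝ × ℝ, p ∈ (G : Set (ℝ×ℝ)) → p ∈ (H : Set (ℝ×ℝ)) :=
    fun p hp => G.le_topologicalClosure hp
  have hmemG : ∀ n m k : ℤ, (((n:ℝ) * x₁ + m, (n:ℝ) * x₂ + k) : ℝ × ℝ) ∈ (G : Set (ℝ×ℝ)) :=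
    fun n m k => ⟨n, m, k, rfl⟩
  -- 1D density of ℤx₁ + ℤ
  have h1d : ∀ s ε : ℝ, 0 < ε → ∃ n m : ℤ, |(n:ℝ) * x₁ + m - s| < ε := by
    intro s ε hε
    rcases (AddSubgroup.closure {x₁, 1}).dense_or_cyclic with hdense | ⟨a, ha⟩
    · obtain ⟨b, hbA, hb⟩ := Metric.mem_closure_iff.mp (hdense s) ε hε
      obtain ⟨n, m, hnm⟩ := AddSubgroup.mem_closure_pair.mp hbA
      refine ⟨n, m, ?_⟩
      rw [Real.dist_eq, abs_sub_comm] at hb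
      have heq : (n:ℝ) * x₁ + m = b := by
        rw [← hnm, zsmul_eq_mul, zsmul_eq_mul, mul_one]
      rwa [heq]
    · exfalso
      have hx₁A : x₁ ∈ AddSubgroup.closure ({x₁, 1} : Set ℝ) :=
        AddSubgroup.subset_closure (by simp)
      have h1A : (1:ℝ) ∈ AddSubgroup.closure ({x₁, 1} : Set ℝ) :=
        AddSubgroup.subset_closure (by simp)
      rw [ha] at hx₁A h1A
      obtain ⟨n, hn⟩ := AddSubgroup.mem_closure_singleton.mp hx₁A
      obtain ⟨p, hp⟩ := AddSubgroup.mem_closure_singleton.mp h1A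
      have hp0 : p ≠ 0 := by rintro rfl; simp at hp
      rw [zsmul_eq_mul] at hn hp
      have hrel : ((-n : ℤ):ℝ) + ((p:ℤ):ℝ) * x₁ + ((0:ℤ):ℝ) * x₂ = 0 := by
        push_cast
        linear_combination (n:ℝ) * hp - (p:ℝ) * hn
      exact hp0 (hind (-n) p 0 hrel).1
  -- first-coordinate surjectivity of the closure
  have hsurj : ∀ x : ℝ, ∃ y : ℝ, (x, y) ∈ (H : Set (ℝ × ℝ)) := by
    intro x
    have h1 : ∀ i : ℕ, ∃ n m : ℤ, |(n:ℝ) * x₁ + m - x| < 1/((i:ℝ)+1) :=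
      fun i => h1d x _ (by positivity)
    choose n m hnm using h1
    set u : ℕ → ℝ := fun i => (n i : ℝ) * x₁ + m i with hudef
    set v : ℕ → ℝ := fun i => Int.fract ((n i : ℝ) * x₂) with hvdef
    have hv : ∀ i, v i ∈ Icc (0:ℝ) 1 := fun i => ⟨Int.fract_nonneg _, (Int.fract_lt_one _).le⟩
    obtain ⟨b, _, φ, hφ, htend⟩ := isCompact_Icc.tendsto_subseq hv
    have huv : ∀ i, (u i, v i) ∈ (G : Set (ℝ×ℝ)) := by
      intro i
      refine ⟨n i, m i, -⌊(n i : ℝ) * x₂⌋, ?_⟩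
      have heq : ((u i, v i) : ℝ × ℝ)
          = (((n i :ℝ)) * x₁ + (m i), (n i :ℝ) * x₂ + ((-⌊(n i :ℝ) * x₂⌋ : ℤ):ℝ)) := by
        ext
        · rfl
        · show Int.fract ((n i :ℝ) * x₂) = _
          rw [Int.fract]
          push_cast
          ring
      rw [heq]
    have hu : Tendsto (fun i => u (φ i)) atTop (nhds x) := by
      have hb : Tendsto (fun i : ℕ => 1/((φ i : ℝ)+1)) atTop (nhds 0) :=
        tendsto_one_div_add_atTop_nhds_zero_nat.comp hφ.tendsto_atTop
      have h2 : Tendsto (fun i => u (φ i) - x) atTop (nhds 0) :=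
        squeeze_zero_norm (fun i => by rw [Real.norm_eq_abs]; exact (hnm (φ i)).le) hb
      have h3 := h2.add_const x
      simpa using h3
    refine ⟨b, ?_⟩
    rw [hHcar]
    exact mem_closure_of_tendsto (hu.prodMk_nhds htend)
      (Eventually.of_forall fun i => huv (φ i))
  -- the vertical subgroup
  set B : AddSubgroup ℝ := H.comap (AddMonoidHom.inr ℝ ℝ) with hBdef
  have hBmem : ∀ y : ℝ, y ∈ B ↔ ((0:ℝ), y) ∈ (H : Set (ℝ×ℝ)) := fun y => Iff.rfl
  have h1B : (1:ℝ) ∈ B := by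
    rw [hBmem]
    exact hGH _ (by simpa using hmemG 0 0 1)
  rcases B.dense_or_cyclic with hdense | ⟨a, ha⟩
  · -- B dense: conclude
    intro p
    rw [Metric.dense_iff] at hdense
    have hfin : p ∈ closure (closure (G : Set (ℝ×ℝ))) := by
      rw [Metric.mem_closure_iff]
      intro ε hε
      obtain ⟨nn, mm, hnm⟩ := h1d p.1 (ε/2) (by linarith)
      obtain ⟨b, hbball, hbB⟩ := hdense (p.2 - (nn:ℝ) * x₂) (ε/2) (by linarith)
      refine ⟨((nn:ℝ) * x₁ + mm, (nn:ℝ) * x₂ + b), ?_, ?_⟩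
      · rw [← hHcar]
        have h2 : (((nn:ℝ) * x₁ + mm, (nn:ℝ) * x₂) : ℝ × ℝ) ∈ (H : Set (ℝ×ℝ)) := by
          simpa using hGH _ (hmemG nn mm 0)
        have h3 : ((0:ℝ), b) ∈ (H : Set (ℝ×ℝ)) := (hBmem b).mp hbB
        have h4 := H.add_mem h2 h3
        have heq : ((((nn:ℝ) * x₁ + mm, (nn:ℝ) * x₂) : ℝ × ℝ) + ((0:ℝ), b))
            = (((nn:ℝ) * x₁ + mm, (nn:ℝ) * x₂ + b) : ℝ × ℝ) := by
          ext <;> simp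
        rwa [heq] at h4
      · rw [Prod.dist_eq]
        have e1 : dist p.1 ((nn:ℝ) * x₁ + mm) < ε/2 := by
          rw [Real.dist_eq, abs_sub_comm]; exact hnm
        have e2 : dist p.2 ((nn:ℝ) * x₂ + b) < ε/2 := by
          rw [Real.dist_eq]
          have h5 := mem_ball_iff_norm.mp hbball
          rw [Real.norm_eq_abs] at h5
          rw [show p.2 - ((nn:ℝ) * x₂ + b) = -(b - (p.2 - (nn:ℝ)*x₂)) by ring, abs_neg]
          linarith
        exact max_lt (by linarith) (by linarith)
    rwa [closure_closure] at hfin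
  · -- B cyclic: contradiction
    exfalso
    rw [ha] at h1B
    obtain ⟨p, hp⟩ := AddSubgroup.mem_closure_singleton.mp h1B
    have hp0 : p ≠ 0 := by rintro rfl; simp at hp
    rw [zsmul_eq_mul] at hp
    set d : ℕ := p.natAbs with hddef
    have hdz : (d:ℤ) ≠ 0 := by
      simp only [hddef]
      exact_mod_cast Int.natAbs_ne_zero.mpr hp0
    have hd0 : (d:ℝ) ≠ 0 := by exact_mod_cast hdz
    have hdabs : (d:ℝ) = |(p:ℝ)| := by
      rw [hddef]
      rw [Nat.cast_natAbs (α := ℝ)]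
      push_cast
      ring
    have hia : (d:ℝ) * a = 1 ∨ (d:ℝ) * a = -1 := by
      rcases abs_cases (p:ℝ) with ⟨h1, _⟩ | ⟨h1, _⟩
      · left; rw [hdabs, h1]; exact hp
      · right; rw [hdabs, h1, neg_mul, hp]
    -- members of B give integers after scaling by d
    have hBint : ∀ y : ℝ, ((0:ℝ), y) ∈ (H : Set (ℝ×ℝ)) → ∃ m : ℤ, (d:ℝ) * y = m := by
      intro y hy
      have hyB : y ∈ B := (hBmem y).mpr hy
      rw [ha] at hyB
      obtain ⟨q, hq⟩ := AddSubgroup.mem_closure_singleton.mp hyB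
      rw [zsmul_eq_mul] at hq
      rcases hia with h | h
      · exact ⟨q, by rw [← hq]; push_cast; linear_combination (q:ℝ) * h⟩
      · exact ⟨-q, by rw [← hq]; push_cast; linear_combination (q:ℝ) * h⟩
    have hBint' : ∀ m : ℤ, ∃ y : ℝ, ((0:ℝ), y) ∈ (H : Set (ℝ×ℝ)) ∧ (d:ℝ) * y = m := by
      intro m
      rcases hia with h | h
      · refine ⟨(m:ℝ) * a, ?_, by linear_combination (m:ℝ) * h⟩
        have : (m:ℝ) * a ∈ B := by
          rw [ha]; exact AddSubgroup.mem_closure_singleton.mpr ⟨m, by rw [zsmul_eq_mul]⟩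
        exact (hBmem _).mp this
      · refine ⟨(-m:ℝ) * a, ?_, by push_cast; linear_combination (-(m:ℝ)) * h⟩
        have : (-m:ℝ) * a ∈ B := by
          rw [ha]
          exact AddSubgroup.mem_closure_singleton.mpr ⟨-m, by rw [zsmul_eq_mul]; push_cast; ring⟩
        exact (hBmem _).mp this
    -- the scaled set
    set e : (ℝ × ℝ) ≃ₜ (ℝ × ℝ) :=
      (Homeomorph.refl ℝ).prodCongr (Homeomorph.mulLeft₀ (d:ℝ) hd0) with hedef
    set Kset : Set (ℝ × ℝ) := e '' (H : Set (ℝ×ℝ)) with hKdef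
    have heapp : ∀ pt : ℝ × ℝ, e pt = (pt.1, (d:ℝ) * pt.2) := fun pt => rfl
    have hKmem : ∀ pt : ℝ × ℝ, pt ∈ (H : Set (ℝ×ℝ)) → (pt.1, (d:ℝ) * pt.2) ∈ Kset := by
      intro pt hpt; exact ⟨pt, hpt, rfl⟩
    have hKclosed : IsClosed Kset := (Homeomorph.isClosed_image e).mpr hHclosed
    have hKadd : ∀ pq qq : ℝ × ℝ, pq ∈ Kset → qq ∈ Kset → pq + qq ∈ Kset := by
      rintro _ _ ⟨pt, hpt, rfl⟩ ⟨qt, hqt, rfl⟩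
      refine ⟨pt + qt, H.add_mem hpt hqt, ?_⟩
      rw [heapp, heapp, heapp]
      ext <;> simp <;> ring
    have hKneg : ∀ pq : ℝ × ℝ, pq ∈ Kset → -pq ∈ Kset := by
      rintro _ ⟨pt, hpt, rfl⟩
      refine ⟨-pt, H.neg_mem hpt, ?_⟩
      rw [heapp, heapp]
      ext <;> simp
    have hKfiber : ∀ z : ℝ, ((0:ℝ), z) ∈ Kset ↔ ∃ m : ℤ, z = m := by
      intro z
      constructor
      · rintro ⟨pt, hpt, heq⟩
        rw [heapp] at heq
        have h1 : pt.1 = 0 := congrArg Prod.fst heq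
        have h2 : (d:ℝ) * pt.2 = z := congrArg Prod.snd heq
        obtain ⟨m, hm⟩ := hBint pt.2 (by rw [← h1]; exact hpt)
        exact ⟨m, by rw [← h2, hm]⟩
      · rintro ⟨m, rfl⟩
        obtain ⟨y, hy, hdy⟩ := hBint' m
        refine ⟨((0:ℝ), y), hy, ?_⟩
        rw [heapp]
        ext <;> simp [hdy]
    have hKex : ∀ x : ℝ, ∃ z : ℝ, (x, z) ∈ Kset := by
      intro x
      obtain ⟨y, hy⟩ := hsurj x
      exact ⟨(d:ℝ) * y, hKmem (x, y) hy⟩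
    obtain ⟨c, hc⟩ := graph_lemma Kset hKclosed hKadd hKneg hKfiber hKex
    obtain ⟨m₁, hm₁⟩ := hc 1 0 (by
      have h1 : ((1:ℝ), (0:ℝ)) ∈ (H : Set (ℝ×ℝ)) := by simpa using hGH _ (hmemG 0 1 0)
      have := hKmem _ h1
      simpa using this)
    obtain ⟨m₂, hm₂⟩ := hc x₁ ((d:ℝ) * x₂) (by
      have h1 : ((x₁ : ℝ), (x₂:ℝ)) ∈ (H : Set (ℝ×ℝ)) := by simpa using hGH _ (hmemG 1 0 0)
      exact hKmem _ h1)
    have hcm : c = -(m₁:ℝ) := by linarith [hm₁]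
    rw [hcm] at hm₂
    have := (hind m₂ (-m₁) (-(d:ℤ)) (by push_cast; linarith [hm₂])).2
    omega


lemma addCircle_coe_int_add (x : ℝ) (m : ℤ) : ((x + m : ℝ) : AddCircle (1:ℝ)) = (x : ℝ) := by
  have h : ((m:ℝ) : AddCircle (1:ℝ)) = 0 := by
    rw [AddCircle.coe_eq_zero_iff]; exact ⟨m, by simp⟩
  have h2 : ((x + m : ℝ) : AddCircle (1:ℝ)) = (x:ℝ) + ((m:ℝ) : AddCircle (1:ℝ)) := by norm_cast
  rw [h2, h, add_zero]

lemma addCircle_dist_coe_le (u v : ℝ) :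
    dist ((u : ℝ) : AddCircle (1:ℝ)) ((v:ℝ) : AddCircle (1:ℝ)) ≤ |u - v| := by
  rw [dist_eq_norm]
  have h : ((u : ℝ) : AddCircle (1:ℝ)) - ((v:ℝ) : AddCircle (1:ℝ)) = ((u - v : ℝ) : AddCircle (1:ℝ)) := by
    norm_cast
  rw [h, AddCircle.norm_eq]
  simp only [inv_one, one_mul, mul_one]
  have := round_le (u - v) 0
  simpa using this

lemma addCircle_dist_coe_lt (u v ε : ℝ)
    (h : dist ((u : ℝ) : AddCircle (1:ℝ)) ((v:ℝ) : AddCircle (1:ℝ)) < ε) :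
    ∃ m : ℤ, |u - v - m| < ε := by
  rw [dist_eq_norm] at h
  have h2 : ((u : ℝ) : AddCircle (1:ℝ)) - ((v:ℝ) : AddCircle (1:ℝ)) = ((u - v : ℝ) : AddCircle (1:ℝ)) := by
    norm_cast
  rw [h2, AddCircle.norm_eq] at h
  simp only [inv_one, one_mul, mul_one] at h
  exact ⟨round (u - v), h⟩

theorem kronecker_nat (x₁ x₂ : ℝ)
    (hind : ∀ a b c : ℤ, (a:ℝ) + b * x₁ + c * x₂ = 0 → b = 0 ∧ c = 0)
    (s₁ s₂ ε : ℝ) (hε : 0 < ε) (N : ℕ) :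
    ∃ n : ℕ, N ≤ n ∧ ∃ m k : ℤ,
      |(n:ℝ) * x₁ - m - s₁| < ε ∧ |(n:ℝ) * x₂ - k - s₂| < ε := by
  set g : AddCircle (1:ℝ) × AddCircle (1:ℝ) := (((x₁:ℝ) : AddCircle (1:ℝ)), ((x₂:ℝ) : AddCircle (1:ℝ))) with hgdef
  set y : AddCircle (1:ℝ) × AddCircle (1:ℝ) := (((s₁:ℝ) : AddCircle (1:ℝ)), ((s₂:ℝ) : AddCircle (1:ℝ))) with hydef
  have hzsmul : ∀ n : ℤ, n • g
      = ((((n:ℝ) * x₁ : ℝ) : AddCircle (1:ℝ)), (((n:ℝ) * x₂ : ℝ) : AddCircle (1:ℝ))) := by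
    intro n
    have h1 : n • g = (n • g.1, n • g.2) := rfl
    rw [h1, hgdef]
    have h2 : ∀ x : ℝ, n • ((x:ℝ) : AddCircle (1:ℝ)) = (((n:ℝ) * x : ℝ) : AddCircle (1:ℝ)) := by
      intro x
      rw [show (n:ℝ) * x = (n • x : ℝ) by rw [zsmul_eq_mul]]
      norm_cast
    simp only [h2]
  have hnsmul : ∀ n : ℕ, n • g
      = ((((n:ℝ) * x₁ : ℝ) : AddCircle (1:ℝ)), (((n:ℝ) * x₂ : ℝ) : AddCircle (1:ℝ))) := by
    intro n
    have h1 : (n:ℤ) • g = n • g := by rw [natCast_zsmul]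
    rw [← h1, hzsmul]
    norm_num
  -- y is in the closure of the ℤ-orbit
  have hyc : y ∈ closure (Set.range (fun n : ℤ => n • g)) := by
    rw [Metric.mem_closure_iff]
    intro ε' hε'
    have hd := kronecker_R2 x₁ x₂ hind (s₁, s₂)
    obtain ⟨q, hqG, hq⟩ := Metric.mem_closure_iff.mp hd ε' hε'
    obtain ⟨n, m, k, rfl⟩ := hqG
    refine ⟨n • g, ⟨n, rfl⟩, ?_⟩
    rw [hzsmul]
    have e1 : dist ((s₁:ℝ) : AddCircle (1:ℝ)) (((n:ℝ) * x₁ : ℝ) : AddCircle (1:ℝ)) < ε' := by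
      rw [show (((n:ℝ) * x₁ : ℝ) : AddCircle (1:ℝ)) = (((n:ℝ) * x₁ + m : ℝ) : AddCircle (1:ℝ)) by
        rw [addCircle_coe_int_add]]
      apply lt_of_le_of_lt (addCircle_dist_coe_le _ _)
      apply lt_of_le_of_lt _ hq
      rw [Prod.dist_eq]
      apply le_trans _ (le_max_left _ _)
      rw [Real.dist_eq]
    have e2 : dist ((s₂:ℝ) : AddCircle (1:ℝ)) (((n:ℝ) * x₂ : ℝ) : AddCircle (1:ℝ)) < ε' := by
      rw [show (((n:ℝ) * x₂ : ℝ) : AddCircle (1:ℝ)) = (((n:ℝ) * x₂ + k : ℝ) : AddCircle (1:ℝ)) by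
        rw [addCircle_coe_int_add]]
      apply lt_of_le_of_lt (addCircle_dist_coe_le _ _)
      apply lt_of_le_of_lt _ hq
      rw [Prod.dist_eq]
      apply le_trans _ (le_max_right _ _)
      rw [Real.dist_eq]
    rw [hydef, Prod.dist_eq]
    exact max_lt e1 e2
  have hmcp : MapClusterPt y atTop (fun n : ℕ => n • g) :=
    ((mapClusterPt_atTop_nsmul_tfae y g).out 3 0).mp hyc
  have hfreq := mapClusterPt_iff_frequently.mp hmcp (Metric.ball y ε) (Metric.ball_mem_nhds y hε)
  obtain ⟨n, hnN, hball⟩ := (frequently_atTop.mp hfreq) N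
  rw [Metric.mem_ball, hnsmul, hydef, Prod.dist_eq] at hball
  have e1 := lt_of_le_of_lt (le_max_left _ _) hball
  have e2 := lt_of_le_of_lt (le_max_right _ _) hball
  obtain ⟨m, hm⟩ := addCircle_dist_coe_lt _ _ _ e1
  obtain ⟨k, hk⟩ := addCircle_dist_coe_lt _ _ _ e2
  exact ⟨n, hnN, m, k, by rwa [show (n:ℝ) * x₁ - s₁ - m = (n:ℝ)*x₁ - m - s₁ by ring] at hm,
    by rwa [show (n:ℝ) * x₂ - s₂ - k = (n:ℝ)*x₂ - k - s₂ by ring] at hk⟩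

set_option maxHeartbeats 1000000 in
theorem stmt15_aux (θ α₁ α₂ : ℝ) (hθ : 0 < θ)
    (hα₁ : α₁ ∈ Set.Ioo (0 : ℝ) (1 / 2)) (hα₂ : α₂ ∈ Set.Ioo (0 : ℝ) (1 / 2))
    (hirr : Irrational α₁)
    (p₁ p₂ : ℤ) (q₁ q₂ : ℕ) (hq₁ : 0 < q₁) (hq₂ : 0 < q₂)
    (hθeq : θ = (p₁ : ℝ) / (q₁ : ℝ) * α₁ + (p₂ : ℝ) / (q₂ : ℝ))
    (hli : LinearIndependent ℚ ![(1 : ℝ), α₁, θ * α₂]) :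
    ∀ (s : ℝ) (w : AddCircle (1 : ℝ)),
      (-((p₁ : ℝ) / (q₁ : ℝ)) * s, ((s : ℝ) : AddCircle (1 : ℝ)), w) ∈
        closure (Sset θ α₁ α₂) := by
  intro s w
  have hq₁R : (0:ℝ) < q₁ := by exact_mod_cast hq₁
  have hq₂R : (0:ℝ) < q₂ := by exact_mod_cast hq₂
  have hq₁ne : (q₁:ℝ) ≠ 0 := ne_of_gt hq₁R
  have hq₂ne : (q₂:ℝ) ≠ 0 := ne_of_gt hq₂R
  have hq₁1 : (1:ℝ) ≤ q₁ := by exact_mod_cast hq₁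
  obtain ⟨w', rfl⟩ := QuotientAddGroup.mk_surjective w
  set x₁ : ℝ := (q₂:ℝ) * α₁ with hx₁def
  set x₂ : ℝ := (q₁:ℝ) * (q₂:ℝ) * (θ * α₂) with hx₂def
  clear_value x₁ x₂
  have hind : ∀ a b c : ℤ, (a:ℝ) + b * x₁ + c * x₂ = 0 → b = 0 ∧ c = 0 := by
    intro a b c h
    have hsum : (∑ i, (![(a:ℚ), (b:ℚ)*(q₂:ℚ), (c:ℚ)*(q₁:ℚ)*(q₂:ℚ)]) i • (![(1:ℝ), α₁, θ * α₂]) i) = 0 := by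
      rw [Fin.sum_univ_three]
      simp only [Matrix.cons_val_zero, Matrix.cons_val_one, Matrix.head_cons,
        Matrix.cons_val_two, Matrix.tail_cons]
      rw [Rat.smul_def, Rat.smul_def, Rat.smul_def]
      push_cast
      rw [hx₁def, hx₂def] at h
      linear_combination h
    have key := Fintype.linearIndependent_iff.mp hli _ hsum
    have hq₂Q : ((q₂:ℚ)) ≠ 0 := by
      have : (0:ℚ) < q₂ := by exact_mod_cast hq₂
      exact ne_of_gt this
    have hq₁Q : ((q₁:ℚ)) ≠ 0 := by
      have : (0:ℚ) < q₁ := by exact_mod_cast hq₁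
      exact ne_of_gt this
    constructor
    · have h1 := key 1
      simp only [Matrix.cons_val_one, Matrix.head_cons] at h1
      rcases mul_eq_zero.mp h1 with h' | h'
      · exact_mod_cast h'
      · exact absurd h' hq₂Q
    · have h2 := key 2
      simp only [Matrix.cons_val_two, Matrix.tail_cons, Matrix.head_cons] at h2
      rcases mul_eq_zero.mp h2 with h' | h'
      · rcases mul_eq_zero.mp h' with h'' | h''
        · exact_mod_cast h''
        · exact absurd h'' hq₁Q
      · exact absurd h' hq₂Q
  rw [Metric.mem_closure_iff]
  intro ε hε
  set C : ℝ := |(p₁:ℝ)| + q₁ + 2 with hCdef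
  have hC : 0 < C := by positivity
  have hCm2 : (1:ℝ) ≤ C - 2 := by rw [hCdef]; linarith [abs_nonneg (p₁:ℝ)]
  clear_value C
  set ε₁ : ℝ := min 1 (ε/C) with hε₁def
  have hε₁ : 0 < ε₁ := by rw [hε₁def]; exact lt_min one_pos (by positivity)
  clear_value ε₁
  have hε₁1 : ε₁ ≤ 1 := by rw [hε₁def]; exact min_le_left _ _
  have hkey : (C-2) * ε₁ < ε := by
    have h1 : (C-2) * ε₁ ≤ (C-2) * (ε/C) :=
      mul_le_mul_of_nonneg_left (by rw [hε₁def]; exact min_le_right _ _) (by linarith)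
    have h2 : (C-2) * (ε/C) < ε := by
      rw [mul_div_assoc', div_lt_iff₀ hC]
      nlinarith
    exact lt_of_le_of_lt h1 h2
  obtain ⟨N, hN⟩ := exists_nat_gt ((|(p₁:ℝ)| *|s| + |(p₁:ℝ)| + 1) / ((q₁:ℝ)*(q₂:ℝ)*θ))
  have hNbig : |(p₁:ℝ)| *|s| + |(p₁:ℝ)| + 1 < (N:ℝ) * ((q₁:ℝ)*(q₂:ℝ)*θ) := by
    rw [div_lt_iff₀ (by positivity)] at hN
    linarith
  obtain ⟨n, hnN, ℓ, j, h1, h2⟩ :=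
    kronecker_nat x₁ x₂ hind (s/(q₁:ℝ)) (w' + (p₁:ℝ)*s*α₂/(q₁:ℝ)) ε₁ hε₁ N
  set e₁ : ℝ := (n:ℝ)*x₁ - ℓ - s/(q₁:ℝ) with he₁def
  set e₂ : ℝ := (n:ℝ)*x₂ - j - (w' + (p₁:ℝ)*s*α₂/(q₁:ℝ)) with he₂def
  clear_value e₁ e₂
  set kk : ℕ := q₁*q₂*n with hkkdef
  have hkkR : (kk:ℝ) = (q₁:ℝ)*(q₂:ℝ)*(n:ℝ) := by rw [hkkdef]; push_cast; ring
  have hq₁s : (q₁:ℝ) * (s/(q₁:ℝ)) = s := by field_simp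
  have hkkθ : (kk:ℝ)*θ = (p₁:ℝ)*((n:ℝ)*x₁) + (q₁:ℝ)*(p₂:ℝ)*(n:ℝ) := by
    have hsplit : θ = (p₁:ℝ)/(q₁:ℝ) * α₁ + (p₂:ℝ)/(q₂:ℝ) := hθeq
    have hdiv1 : (q₁:ℝ) * ((p₁:ℝ)/(q₁:ℝ)) = (p₁:ℝ) := by field_simp
    have hdiv2 : (q₂:ℝ) * ((p₂:ℝ)/(q₂:ℝ)) = (p₂:ℝ) := by field_simp
    linear_combination (q₁:ℝ)*(q₂:ℝ)*(n:ℝ)*hsplit + θ*hkkR - (p₁:ℝ)*(n:ℝ)*hx₁def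
      + (q₂:ℝ)*(n:ℝ)*α₁*hdiv1 + (q₁:ℝ)*(n:ℝ)*hdiv2
  clear_value kk
  set mz : ℤ := (q₁:ℤ)*p₂*(n:ℤ) + p₁*ℓ with hmzdef
  clear_value mz
  have hmzR : (mz:ℝ) = (q₁:ℝ)*(p₂:ℝ)*(n:ℝ) + (p₁:ℝ)*(ℓ:ℝ) := by rw [hmzdef]; push_cast; ring
  have hmzval : (mz:ℝ) = (kk:ℝ)*θ - (p₁:ℝ)*(s/(q₁:ℝ)) - (p₁:ℝ)*e₁ := by
    rw [hmzR]
    linear_combination (-1 : ℝ) * hkkθ + (p₁:ℝ) * he₁def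
  have hnn : (N:ℝ) ≤ (n:ℝ) := by exact_mod_cast hnN
  have hkkth : (N:ℝ) * ((q₁:ℝ)*(q₂:ℝ)*θ) ≤ (kk:ℝ)*θ := by
    have hh : (kk:ℝ)*θ = (n:ℝ) * ((q₁:ℝ)*(q₂:ℝ)*θ) := by rw [hkkR]; ring
    rw [hh]
    exact mul_le_mul_of_nonneg_right hnn (by positivity)
  have habs1 : |(p₁:ℝ) * (s/(q₁:ℝ))| ≤ |(p₁:ℝ)| * |s| := by
    rw [abs_mul]
    apply mul_le_mul_of_nonneg_left _ (abs_nonneg _)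
    rw [abs_div, abs_of_pos hq₁R, div_le_iff₀ hq₁R]
    nlinarith [abs_nonneg s]
  have habs2 : |(p₁:ℝ) * e₁| ≤ |(p₁:ℝ)| * ε₁ := by
    rw [abs_mul]
    exact mul_le_mul_of_nonneg_left h1.le (abs_nonneg _)
  have habs2' : |(p₁:ℝ) * e₁| ≤ |(p₁:ℝ)| := by
    apply le_trans habs2
    have h9 : |(p₁:ℝ)| * ε₁ ≤ |(p₁:ℝ)| * 1 := mul_le_mul_of_nonneg_left hε₁1 (abs_nonneg _)
    linarith
  have hmz0 : (0:ℝ) < (mz:ℝ) := by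
    rw [hmzval]
    have t1 := le_abs_self ((p₁:ℝ) * (s/(q₁:ℝ)))
    have t2 := le_abs_self ((p₁:ℝ) * e₁)
    linarith
  have hmznn : 0 ≤ mz := by exact_mod_cast hmz0.le
  set mn : ℕ := mz.toNat with hmndef
  clear_value mn
  have hmnR : ((mn:ℕ):ℝ) = (mz:ℝ) := by
    rw [hmndef]
    exact_mod_cast Int.toNat_of_nonneg hmznn
  -- candidate point
  refine ⟨((mn:ℝ) - (kk:ℝ)*θ, (((kk:ℝ)*α₁ : ℝ) : AddCircle (1:ℝ)),
    (((mn:ℝ)*α₂ : ℝ) : AddCircle (1:ℝ))), ⟨kk, mn, rfl⟩, ?_⟩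
  have hco1 : (mn:ℝ) - (kk:ℝ)*θ = -((p₁:ℝ)/(q₁:ℝ))*s - (p₁:ℝ)*e₁ := by
    rw [hmnR, hmzval]; ring
  have d1 : dist (-((p₁:ℝ)/(q₁:ℝ))*s) ((mn:ℝ) - (kk:ℝ)*θ) < ε := by
    rw [Real.dist_eq, hco1,
      show -((p₁:ℝ)/(q₁:ℝ))*s - (-((p₁:ℝ)/(q₁:ℝ))*s - (p₁:ℝ)*e₁) = (p₁:ℝ)*e₁ by ring]
    apply lt_of_le_of_lt habs2
    apply lt_of_le_of_lt _ hkey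
    apply mul_le_mul_of_nonneg_right _ hε₁.le
    rw [hCdef]; linarith
  have hkkα : (kk:ℝ)*α₁ = (s + (q₁:ℝ)*e₁) + (((q₁:ℤ)*ℓ : ℤ):ℝ) := by
    push_cast
    linear_combination α₁ * hkkR - (q₁:ℝ)*(n:ℝ)*hx₁def - (q₁:ℝ)*he₁def + hq₁s
  have d2 : dist ((s:ℝ) : AddCircle (1:ℝ)) ((((kk:ℝ)*α₁ : ℝ)) : AddCircle (1:ℝ)) < ε := by
    rw [show ((((kk:ℝ)*α₁ : ℝ)) : AddCircle (1:ℝ))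
        = ((s + (q₁:ℝ)*e₁ : ℝ) : AddCircle (1:ℝ)) by rw [hkkα]; exact addCircle_coe_int_add _ _]
    apply lt_of_le_of_lt (addCircle_dist_coe_le _ _)
    rw [show s - (s + (q₁:ℝ)*e₁) = -((q₁:ℝ)*e₁) by ring, abs_neg, abs_mul, abs_of_pos hq₁R]
    apply lt_of_le_of_lt _ hkey
    apply mul_le_mul (by rw [hCdef]; linarith [abs_nonneg (p₁:ℝ)]) h1.le (abs_nonneg _)
      (by linarith)
  have hkkθα : (kk:ℝ)*θ*α₂ = (n:ℝ)*x₂ := by rw [hkkR, hx₂def]; ring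
  have hmnα : (mn:ℝ)*α₂ = (w' + (e₂ - (p₁:ℝ)*e₁*α₂)) + ((j:ℤ):ℝ) := by
    rw [hmnR, hmzval, he₂def]
    linear_combination hkkθα
  have habsα : |α₂| ≤ 1 := by
    rw [abs_of_pos hα₂.1]; linarith [hα₂.2]
  have d3 : dist ((w' : ℝ) : AddCircle (1:ℝ)) ((((mn:ℝ)*α₂ : ℝ)) : AddCircle (1:ℝ)) < ε := by
    rw [show ((((mn:ℝ)*α₂ : ℝ)) : AddCircle (1:ℝ))
        = ((w' + (e₂ - (p₁:ℝ)*e₁*α₂) : ℝ) : AddCircle (1:ℝ)) by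
        rw [hmnα]; exact addCircle_coe_int_add _ _]
    apply lt_of_le_of_lt (addCircle_dist_coe_le _ _)
    rw [show w' - (w' + (e₂ - (p₁:ℝ)*e₁*α₂)) = -(e₂ - (p₁:ℝ)*e₁*α₂) by ring, abs_neg]
    have t1 : |e₂ - (p₁:ℝ)*e₁*α₂| ≤ |e₂| + |(p₁:ℝ)*e₁*α₂| := by
      rw [sub_eq_add_neg]
      exact (abs_add_le _ _).trans (le_of_eq (by rw [abs_neg]))
    have t2 : |(p₁:ℝ)*e₁*α₂| ≤ |(p₁:ℝ)| * ε₁ := by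
      rw [abs_mul]
      calc |(p₁:ℝ)*e₁| * |α₂| ≤ |(p₁:ℝ)*e₁| * 1 :=
            mul_le_mul_of_nonneg_left habsα (abs_nonneg _)
      _ = |(p₁:ℝ)*e₁| := mul_one _
      _ ≤ |(p₁:ℝ)| * ε₁ := habs2
    have t3 : |e₂| + |(p₁:ℝ)| * ε₁ ≤ (C - 2) * ε₁ := by
      have : |e₂| < ε₁ := h2
      have hc2 : (1 + |(p₁:ℝ)|) * ε₁ ≤ (C-2) * ε₁ := by
        apply mul_le_mul_of_nonneg_right _ hε₁.le
        rw [hCdef]; linarith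
      nlinarith
    linarith [hkey]
  rw [Prod.dist_eq, Prod.dist_eq]
  exact max_lt d1 (max_lt d2 d3)


/-- Suppose `α₁` is irrational, `θ = (p₁/q₁)·α₁ + p₂/q₂`, and `1, α₁, θ·α₂` are linearly
independent over `ℚ`. Then for every `s ∈ ℝ` and every `w ∈ ℝ/ℤ`, the point
`(−(p₁/q₁)·s, s mod 1, w)` lies in the closure of `S`. -/
theorem stmt15 (θ α₁ α₂ : ℝ) (hθ : 0 < θ)
    (hα₁ : α₁ ∈ Set.Ioo (0 : ℝ) (1 / 2)) (hα₂ : α₂ ∈ Set.Ioo (0 : ℝ) (1 / 2))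
    (hirr : Irrational α₁)
    (p₁ p₂ : ℤ) (q₁ q₂ : ℕ) (hq₁ : 0 < q₁) (hq₂ : 0 < q₂)
    (hθeq : θ = (p₁ : ℝ) / (q₁ : ℝ) * α₁ + (p₂ : ℝ) / (q₂ : ℝ))
    (hli : LinearIndependent ℚ ![(1 : ℝ), α₁, θ * α₂]) :
    ∀ (s : ℝ) (w : AddCircle (1 : ℝ)),
      (-((p₁ : ℝ) / (q₁ : ℝ)) * s, ((s : ℝ) : AddCircle (1 : ℝ)), w) ∈
        closure (Sset θ α₁ α₂) :=
  stmt15_aux θ α₁ α₂ hθ hα₁ hα₂ hirr p₁ p₂ q₁ q₂ hq₁ hq₂ hθeq hli
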